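/- arXiv:2408.13903 — 2 statements merged into one kernel-verified Lean document; each statement's English description precedes it below -/
import Mathlib

section
/- If (p,i,n,o,w) is a classical solution of the 1D multi-species forward system whose fields are continuous in t on [0,1] and which satisfies the initial conditions p(·,0) = p₀, i(·,0) = 0, n(·,0) = 0, w(·,0) = 1 − p₀ for some continuous function p₀ : Ω → ℝ, then p(x,t) + i(x,t) + n(x,t) + w(x,t) = 1 for all x ∈ Ω and t ∈ [0,1]. -/
open Real

/-- Smoothed Heaviside function `H_ω(x) = (1+e^{−ωx})⁻¹`. -/
noncomputable def Hsm (ω x : ℝ) : ℝ := (1 + Real.exp (-ω * x))⁻¹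

/-- Oxygen multiplier `φ` in the logistic reaction operator. -/
noncomputable def phiR (om oi o : ℝ) : ℝ :=
  if o < om then 0 else if o ≤ oi then (o - om) / (oi - om) else 1

/-- a classical solution of the 1D multi-species forward system with the stated
initial conditions satisfies `p + i + n + w = 1` on `Ω × [0,1]`. -/
theorem total_density_equals_one_1D
    (κ ρ α0 β0 γ0 δc δs oh om oi ω : ℝ)
    (hκ : 0 ≤ κ) (hρ : 0 ≤ ρ) (hα0 : 0 ≤ α0) (hβ0 : 0 ≤ β0) (hγ0 : 0 ≤ γ0)
    (hδc : 0 ≤ δc) (hδs : 0 ≤ δs) (homoi : om < oi) (hω : 0 < ω)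
    (p i n o w : ℝ → ℝ → ℝ)
    (hper : ∀ t, Function.Periodic (fun x => p x t) (2 * Real.pi) ∧
        Function.Periodic (fun x => i x t) (2 * Real.pi) ∧
        Function.Periodic (fun x => n x t) (2 * Real.pi) ∧
        Function.Periodic (fun x => o x t) (2 * Real.pi) ∧
        Function.Periodic (fun x => w x t) (2 * Real.pi))
    (hregx : ∀ t ∈ Set.Icc (0:ℝ) 1, ContDiff ℝ 2 (fun x => p x t) ∧
        ContDiff ℝ 2 (fun x => i x t) ∧ ContDiff ℝ 2 (fun x => n x t) ∧
        ContDiff ℝ 2 (fun x => o x t) ∧ ContDiff ℝ 2 (fun x => w x t))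
    (hregt : ∀ x, ContDiffOn ℝ 1 (fun τ => p x τ) (Set.Icc 0 1) ∧
        ContDiffOn ℝ 1 (fun τ => i x τ) (Set.Icc 0 1) ∧
        ContDiffOn ℝ 1 (fun τ => n x τ) (Set.Icc 0 1) ∧
        ContDiffOn ℝ 1 (fun τ => o x τ) (Set.Icc 0 1) ∧
        ContDiffOn ℝ 1 (fun τ => w x τ) (Set.Icc 0 1))
    (heqp : ∀ x ∈ Set.Icc (0:ℝ) (2 * Real.pi), ∀ t ∈ Set.Ioc (0:ℝ) 1,
        HasDerivAt (fun τ => p x τ)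
          (ρ * w x t * phiR om oi (o x t) * p x t * (1 - (p x t + i x t + n x t))
            - α0 * Hsm ω (oi - o x t) * p x t * (1 - i x t)
            + β0 * Hsm ω (o x t - oi) * i x t * (1 - p x t)
            - γ0 * Hsm ω (oh - o x t) * p x t * (1 - n x t)) t)
    (heqi : ∀ x ∈ Set.Icc (0:ℝ) (2 * Real.pi), ∀ t ∈ Set.Ioc (0:ℝ) 1,
        HasDerivAt (fun τ => i x τ)
          (deriv (fun y => κ * w y t * deriv (fun z => i z t) y) x
            + ρ * w x t * phiR om oi (o x t) * i x t * (1 - (p x t + i x t + n x t))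
            + α0 * Hsm ω (oi - o x t) * p x t * (1 - i x t)
            - β0 * Hsm ω (o x t - oi) * i x t * (1 - p x t)
            - γ0 * Hsm ω (oh - o x t) * i x t * (1 - n x t)) t)
    (heqn : ∀ x ∈ Set.Icc (0:ℝ) (2 * Real.pi), ∀ t ∈ Set.Ioc (0:ℝ) 1,
        HasDerivAt (fun τ => n x τ)
          (γ0 * Hsm ω (oh - o x t) * (i x t + p x t) * (1 - n x t)) t)
    (heqo : ∀ x ∈ Set.Icc (0:ℝ) (2 * Real.pi), ∀ t ∈ Set.Ioc (0:ℝ) 1,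
        HasDerivAt (fun τ => o x τ)
          (-(δc * o x t * p x t) + δs * (1 - o x t) * w x t) t)
    (heqw : ∀ x ∈ Set.Icc (0:ℝ) (2 * Real.pi), ∀ t ∈ Set.Ioc (0:ℝ) 1,
        HasDerivAt (fun τ => w x τ)
          (-(deriv (fun y => κ * w y t * deriv (fun z => i z t) y) x
            + ρ * w x t * phiR om oi (o x t) * p x t * (1 - (p x t + i x t + n x t))
            + ρ * w x t * phiR om oi (o x t) * i x t * (1 - (p x t + i x t + n x t)))) t)
    (p0 : ℝ → ℝ) (hp0cont : Continuous p0)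
    (hicp : ∀ x, p x 0 = p0 x) (hici : ∀ x, i x 0 = 0) (hicn : ∀ x, n x 0 = 0)
    (hicw : ∀ x, w x 0 = 1 - p0 x) :
    ∀ x ∈ Set.Icc (0:ℝ) (2 * Real.pi), ∀ t ∈ Set.Icc (0:ℝ) 1,
      p x t + i x t + n x t + w x t = 1 := by
  intro x hx
  set S : ℝ → ℝ := fun τ => p x τ + i x τ + n x τ + w x τ with hSdef
  have hS0 : S 0 = 1 := by
    simp only [hSdef, hicp x, hici x, hicn x, hicw x]; ring
  have hderiv : ∀ t ∈ Set.Ioc (0:ℝ) 1, HasDerivAt S 0 t := by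
    intro t ht
    have h := (((heqp x hx t ht).add (heqi x hx t ht)).add (heqn x hx t ht)).add
      (heqw x hx t ht)
    exact h.congr_deriv (by ring)
  have hcont : ContinuousOn S (Set.Icc 0 1) := by
    obtain ⟨h1, h2, h3, h4, h5⟩ := hregt x
    exact ((h1.continuousOn.add h2.continuousOn).add h3.continuousOn).add h5.continuousOn
  have key : ∀ t ∈ Set.Ioc (0:ℝ) 1, S t = S 1 := by
    intro t ht
    have hsub : Set.Icc t 1 ⊆ Set.Icc (0:ℝ) 1 := Set.Icc_subset_Icc ht.1.le le_rfl
    have := constant_of_has_deriv_right_zero (f := S) (a := t) (b := 1)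
      (hcont.mono hsub)
      (fun y hy => (hderiv y ⟨lt_of_lt_of_le ht.1 hy.1, hy.2.le⟩).hasDerivWithinAt)
      1 (Set.right_mem_Icc.mpr ht.2)
    exact this.symm
  have hS1 : S 1 = 1 := by
    have hne : (nhdsWithin (0:ℝ) (Set.Ioc 0 1)).NeBot := by
      rw [nhdsWithin_Ioc_eq_nhdsGT (by norm_num : (0:ℝ) < 1)]
      infer_instance
    have h1 : Filter.Tendsto S (nhdsWithin 0 (Set.Ioc 0 1)) (nhds (S 0)) :=
      ((hcont 0 (Set.left_mem_Icc.mpr zero_le_one)).mono Set.Ioc_subset_Icc_self)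
    have h2 : Filter.Tendsto S (nhdsWithin 0 (Set.Ioc 0 1)) (nhds (S 1)) := by
      refine Filter.Tendsto.congr' ?_ tendsto_const_nhds
      exact Filter.eventually_of_mem self_mem_nhdsWithin (fun y hy => (key y hy).symm)
    exact (tendsto_nhds_unique h2 h1).trans hS0
  intro t ht
  rcases eq_or_lt_of_le ht.1 with h0 | h0
  · rw [← h0]; exact hS0
  · exact (key t ⟨h0, ht.2⟩).trans hS1
end

section
/- J : ℝ → ℝ is differentiable at every i_e ∈ ℝ, with J′(i_e) = −∫_Ω (O_l(x; i_e) − l_d(x))·ψ(x)·H_ω′(i₁(x) − i_e) dx, where H_ω′ is the derivative of H_ω. (This is the gradient of the objective with respect to the edema threshold parameter i_e, eq. (23j) of the paper.) -/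
open Real

open MeasureTheory

lemma one_add_exp_pos (s : ℝ) : 0 < 1 + Real.exp s := by positivity

lemma hsm_hasDerivAt (ω t : ℝ) :
    HasDerivAt (Hsm ω) (ω * Real.exp (-ω * t) * ((1 + Real.exp (-ω * t))^2)⁻¹) t := by
  have h0 : HasDerivAt (fun x : ℝ => -ω * x) (-ω) t := by
    simpa using (hasDerivAt_id t).const_mul (-ω)
  have h1 : HasDerivAt (fun x : ℝ => Real.exp (-ω * x)) (Real.exp (-ω * t) * (-ω)) t :=
    (Real.hasDerivAt_exp (-ω * t)).comp t h0
  have h2 : HasDerivAt (fun x : ℝ => 1 + Real.exp (-ω * x)) (Real.exp (-ω * t) * (-ω)) t :=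
    h1.const_add 1
  have hne : 1 + Real.exp (-ω * t) ≠ 0 := (by positivity : (0:ℝ) < 1 + Real.exp (-ω * t)).ne'
  have h3 : HasDerivAt (Hsm ω) _ t := h2.fun_inv hne
  convert h3 using 1
  field_simp

lemma hsm_deriv (ω t : ℝ) :
    deriv (Hsm ω) t = ω * Real.exp (-ω * t) * ((1 + Real.exp (-ω * t))^2)⁻¹ :=
  (hsm_hasDerivAt ω t).deriv

lemma hsm_bounds (ω t : ℝ) : 0 ≤ Hsm ω t ∧ Hsm ω t ≤ 1 := by
  unfold Hsm
  constructor
  · positivity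
  · rw [inv_le_one_iff₀]
    right
    nlinarith [Real.exp_pos (-ω * t)]

lemma hsm_deriv_bound (ω : ℝ) (hω : 0 < ω) (t : ℝ) :
    |ω * Real.exp (-ω * t) * ((1 + Real.exp (-ω * t))^2)⁻¹| ≤ ω := by
  have he := Real.exp_pos (-ω * t)
  rw [abs_of_nonneg (by positivity)]
  rw [mul_inv_le_iff₀ (by positivity)]
  nlinarith [mul_nonneg hω.le (by positivity : (0:ℝ) ≤ 1 + Real.exp (-ω*t) + Real.exp (-ω*t)^2)]

lemma hsm_continuous (ω : ℝ) : Continuous (Hsm ω) := by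
  unfold Hsm
  fun_prop (disch := intros; positivity)

/-- the edema misfit `J(i_e) = ½∫_Ω (ψ·H_ω(i₁−i_e) − l_d)²` is differentiable in
the edema threshold `i_e`, with
`J′(i_e) = −∫_Ω (O_l − l_d)·ψ·H_ω′(i₁ − i_e)` (eq. (23j) of the paper). -/
theorem edema_threshold_gradient
    (ω : ℝ) (hω : 0 < ω)
    (ψ i1 ld : ℝ → ℝ)
    (hψ : ContinuousOn ψ (Set.Icc 0 (2 * Real.pi)))
    (hi1 : ContinuousOn i1 (Set.Icc 0 (2 * Real.pi)))
    (hld : ContinuousOn ld (Set.Icc 0 (2 * Real.pi))) :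
    ∀ ie : ℝ,
      HasDerivAt
        (fun e => (1/2) * ∫ x in (0:ℝ)..(2 * Real.pi), (ψ x * Hsm ω (i1 x - e) - ld x)^2)
        (-(∫ x in (0:ℝ)..(2 * Real.pi),
            (ψ x * Hsm ω (i1 x - ie) - ld x) * ψ x * deriv (Hsm ω) (i1 x - ie)))
        ie := by
  intro ie
  have hab : (0:ℝ) ≤ 2 * Real.pi := by positivity
  set Ω : Set ℝ := Set.Icc 0 (2 * Real.pi) with hΩ
  set μ : Measure ℝ := volume.restrict (Set.Ioc 0 (2 * Real.pi)) with hμ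
  set H' : ℝ → ℝ := fun t => ω * Real.exp (-ω * t) * ((1 + Real.exp (-ω * t))^2)⁻¹ with hH'
  set F : ℝ → ℝ → ℝ := fun e x => (ψ x * Hsm ω (i1 x - e) - ld x)^2 with hF
  set F' : ℝ → ℝ → ℝ := fun e x =>
    (-2) * ((ψ x * Hsm ω (i1 x - e) - ld x) * ψ x * H' (i1 x - e)) with hF'def
  -- bounds for ψ and ld
  obtain ⟨Cψ, hCψ⟩ := (isCompact_Icc).exists_bound_of_continuousOn hψ
  obtain ⟨Cl, hCl⟩ := (isCompact_Icc).exists_bound_of_continuousOn hld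
  have hCψ0 : 0 ≤ Cψ := le_trans (norm_nonneg _) (hCψ 0 (by constructor <;> simp [hab]))
  have hCl0 : 0 ≤ Cl := le_trans (norm_nonneg _) (hCl 0 (by constructor <;> simp [hab]))
  set M : ℝ := 2 * (Cψ + Cl) * Cψ * ω with hM
  -- measurability of F e for each e
  have hFcont : ∀ e : ℝ, ContinuousOn (F e) Ω := by
    intro e
    apply ContinuousOn.pow
    exact ((hψ.mul (((hsm_continuous ω).comp_continuousOn
      (hi1.sub continuousOn_const)))).sub hld)
  have hIoc : Set.Ioc (0:ℝ) (2 * Real.pi) ⊆ Ω := Set.Ioc_subset_Icc_self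
  have hFmeas : ∀ e : ℝ, AEStronglyMeasurable (F e) μ := fun e =>
    ((hFcont e).mono hIoc).aestronglyMeasurable measurableSet_Ioc
  have hH'c : Continuous H' := by
    rw [hH']; fun_prop (disch := intros; positivity)
  have hF'cont : ContinuousOn (F' ie) Ω :=
    continuousOn_const.mul
      ((((hψ.mul ((hsm_continuous ω).comp_continuousOn (hi1.sub continuousOn_const))).sub
        hld).mul hψ).mul (hH'c.comp_continuousOn (hi1.sub continuousOn_const)))
  have hF'meas : AEStronglyMeasurable (F' ie) μ :=
    (hF'cont.mono hIoc).aestronglyMeasurable measurableSet_Ioc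
  -- pointwise derivative
  have hdiff : ∀ x ∈ Ω, ∀ e : ℝ, HasDerivAt (fun e => F e x) (F' e x) e := by
    intro x _ e
    have h0 : HasDerivAt (fun e : ℝ => i1 x - e) (-1) e := by
      simpa using (hasDerivAt_id e).const_sub (i1 x)
    have h1 : HasDerivAt (fun e : ℝ => Hsm ω (i1 x - e)) (H' (i1 x - e) * (-1)) e :=
      (hsm_hasDerivAt ω (i1 x - e)).comp e h0
    have h2 : HasDerivAt (fun e : ℝ => ψ x * Hsm ω (i1 x - e) - ld x)
        (ψ x * (H' (i1 x - e) * (-1))) e := (h1.const_mul (ψ x)).sub_const (ld x)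
    have h3 : HasDerivAt (fun e : ℝ => (ψ x * Hsm ω (i1 x - e) - ld x)^2) _ e := h2.fun_pow 2
    convert h3 using 1
    simp [hF'def]
    ring
  -- bound
  have hbound : ∀ x ∈ Ω, ∀ e : ℝ, ‖F' e x‖ ≤ M := by
    intro x hx e
    have hψx := hCψ x hx
    have hlx := hCl x hx
    have hH := hsm_bounds ω (i1 x - e)
    have hHd := hsm_deriv_bound ω hω (i1 x - e)
    have habs : |ψ x * Hsm ω (i1 x - e) - ld x| ≤ Cψ + Cl := by
      calc |ψ x * Hsm ω (i1 x - e) - ld x| ≤ |ψ x * Hsm ω (i1 x - e)| + |ld x| :=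
            abs_sub _ _
        _ ≤ Cψ + Cl := by
            rw [abs_mul]
            gcongr
            · exact le_trans (mul_le_of_le_one_right (abs_nonneg _) (abs_le.mpr ⟨by linarith [hH.1], hH.2⟩)) (by simpa using hψx)
            · simpa using hlx
    have : ‖F' e x‖ = 2 * (|ψ x * Hsm ω (i1 x - e) - ld x| * |ψ x| * |H' (i1 x - e)|) := by
      simp [hF'def, abs_mul]
    rw [this, hM]
    have h1 : |ψ x| ≤ Cψ := by simpa using hψx
    have h2 : |H' (i1 x - e)| ≤ ω := hHd
    calc 2 * (|ψ x * Hsm ω (i1 x - e) - ld x| * |ψ x| * |H' (i1 x - e)|)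
        ≤ 2 * ((Cψ + Cl) * Cψ * ω) := by
          gcongr
      _ = 2 * (Cψ + Cl) * Cψ * ω := by ring
  -- integrability
  have hInt : Integrable (F ie) μ :=
    ((hFcont ie).integrableOn_Icc).mono_set Set.Ioc_subset_Icc_self
  have h_bound' : ∀ᵐ x ∂μ, ∀ e ∈ Metric.ball ie 1, ‖F' e x‖ ≤ M := by
    filter_upwards [MeasureTheory.ae_restrict_mem measurableSet_Ioc] with x hx e _
    exact hbound x (hIoc hx) e
  have h_diff' : ∀ᵐ x ∂μ, ∀ e ∈ Metric.ball ie 1, HasDerivAt (F · x) (F' e x) e := by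
    filter_upwards [MeasureTheory.ae_restrict_mem measurableSet_Ioc] with x hx e _
    exact hdiff x (hIoc hx) e
  have hbnd_int : Integrable (fun _ : ℝ => M) μ :=
    integrableOn_const measure_Ioc_lt_top.ne
  have key := hasDerivAt_integral_of_dominated_loc_of_deriv_le (F' := F')
    (Metric.ball_mem_nhds ie one_pos) (Filter.Eventually.of_forall hFmeas) hInt hF'meas h_bound' hbnd_int h_diff'
  have hD := (key.2).const_mul (1/2 : ℝ)
  have hfun : (fun e => (1/2 : ℝ) * ∫ x in (0:ℝ)..(2 * Real.pi),
      (ψ x * Hsm ω (i1 x - e) - ld x)^2) = fun e => (1/2 : ℝ) * ∫ a, F e a ∂μ := by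
    funext e
    rw [intervalIntegral.integral_of_le hab]
  rw [hfun]
  have hderiv_eq : -(∫ x in (0:ℝ)..(2 * Real.pi),
      (ψ x * Hsm ω (i1 x - ie) - ld x) * ψ x * deriv (Hsm ω) (i1 x - ie))
      = (1/2 : ℝ) * ∫ a, F' ie a ∂μ := by
    rw [intervalIntegral.integral_of_le hab]
    have : ∫ a, F' ie a ∂μ = (-2 : ℝ) * ∫ a in Set.Ioc (0:ℝ) (2 * Real.pi),
        (ψ a * Hsm ω (i1 a - ie) - ld a) * ψ a * H' (i1 a - ie) := by
      rw [← MeasureTheory.integral_const_mul]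
    rw [this]
    have : ∀ a : ℝ, (ψ a * Hsm ω (i1 a - ie) - ld a) * ψ a * deriv (Hsm ω) (i1 a - ie)
        = (ψ a * Hsm ω (i1 a - ie) - ld a) * ψ a * H' (i1 a - ie) := by
      intro a; rw [hsm_deriv]
    simp only [this]
    ring
  rw [hderiv_eq]
  exact hD
end
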